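/- arXiv:math/0307251 — 2 statements merged into one kernel-verified Lean document; each statement's English description precedes it below -/
import Mathlib

section
/- For positive integers k and m, there exists a linear map L : ℝᵏ → M_r(ℂ) (the r×r complex matrices) with L(x) invertible for every x ≠ 0, where r = m·2^{⌊(k−1)/2⌋}. (Existence direction: such L can be constructed from Clifford multiplication.) -/
open Matrix

def CliffGood {k : ℕ} {n : Type} [Fintype n] [DecidableEq n]
    (L : (Fin k → ℝ) →ₗ[ℝ] Matrix n n ℂ) : Prop :=
  ∀ x : Fin k → ℝ,
    (L x)ᴴ * L x = ((∑ i, x i ^ 2 : ℝ) : ℂ) • 1 ∧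
    L x * (L x)ᴴ = ((∑ i, x i ^ 2 : ℝ) : ℂ) • 1

lemma cliffGood_isUnit {k : ℕ} {n : Type} [Fintype n] [DecidableEq n]
    {L : (Fin k → ℝ) →ₗ[ℝ] Matrix n n ℂ} (hL : CliffGood L)
    {x : Fin k → ℝ} (hx : x ≠ 0) : IsUnit (L x) := by
  have hpos : (0 : ℝ) < ∑ i, x i ^ 2 := by
    obtain ⟨i, hi⟩ : ∃ i, x i ≠ 0 := by
      by_contra h; push_neg at h; exact hx (funext h)
    apply Finset.sum_pos' (fun j _ => sq_nonneg _)
    exact ⟨i, Finset.mem_univ i, by positivity⟩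
  have hcne : ((∑ i, x i ^ 2 : ℝ) : ℂ) ≠ 0 :=
    Complex.ofReal_ne_zero.mpr (ne_of_gt hpos)
  have h : L x * ((((∑ i, x i ^ 2 : ℝ) : ℂ))⁻¹ • (L x)ᴴ) = 1 := by
    rw [mul_smul_comm, (hL x).2, smul_smul, inv_mul_cancel₀ hcne, one_smul]
  exact @isUnit_of_invertible _ _ (L x) (invertibleOfRightInverse _ _ h)

/-- the linear functional `x ↦ x a + x b * i`. -/
def cfun {k : ℕ} (a b : Fin k) : (Fin k → ℝ) →ₗ[ℝ] ℂ where
  toFun x := ((x a : ℝ) : ℂ) + ((x b : ℝ) : ℂ) * Complex.I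
  map_add' x y := by push_cast [Pi.add_apply]; ring
  map_smul' c x := by
    push_cast [Pi.smul_apply, smul_eq_mul, Complex.real_smul, RingHom.id_apply]; ring

lemma star_cfun_mul {k : ℕ} (a b : Fin k) (x : Fin k → ℝ) :
    star (cfun a b x) * cfun a b x = ((x a ^ 2 + x b ^ 2 : ℝ) : ℂ) := by
  simp only [cfun, LinearMap.coe_mk, AddHom.coe_mk, Complex.star_def]
  push_cast
  simp [Complex.ext_iff, ← Complex.ofReal_pow]
  constructor <;> ring

lemma cfun_mul_star {k : ℕ} (a b : Fin k) (x : Fin k → ℝ) :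
    cfun a b x * star (cfun a b x) = ((x a ^ 2 + x b ^ 2 : ℝ) : ℂ) := by
  rw [mul_comm]; exact star_cfun_mul a b x

lemma cliff_base2 (n : Type) [Fintype n] [DecidableEq n] :
    ∃ L : (Fin 2 → ℝ) →ₗ[ℝ] Matrix n n ℂ, CliffGood L := by
  refine ⟨{ toFun := fun x => cfun 0 1 x • 1
            map_add' := fun x y => by rw [map_add, add_smul]
            map_smul' := fun c x => by
              rw [LinearMap.map_smul, RingHom.id_apply, smul_assoc] }, fun x => ?_⟩
  constructor <;>
  · simp only [LinearMap.coe_mk, AddHom.coe_mk, conjTranspose_smul, conjTranspose_one,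
      smul_mul_smul_comm, one_mul, Fin.sum_univ_two, ← Complex.star_def]
    (try rw [star_cfun_mul]); (try rw [cfun_mul_star])

lemma cliff_base1 (n : Type) [Fintype n] [DecidableEq n] :
    ∃ L : (Fin 1 → ℝ) →ₗ[ℝ] Matrix n n ℂ, CliffGood L := by
  refine ⟨{ toFun := fun x => ((x 0 : ℝ) : ℂ) • 1
            map_add' := fun x y => by push_cast [Pi.add_apply]; rw [add_smul]
            map_smul' := fun c x => by
              push_cast [Pi.smul_apply, smul_eq_mul]
              rw [id_eq, ← smul_assoc, Complex.real_smul] }, fun x => ?_⟩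
  constructor <;>
  · simp only [LinearMap.coe_mk, AddHom.coe_mk, conjTranspose_smul, conjTranspose_one,
      smul_mul_smul_comm, one_mul, Complex.star_def, Complex.conj_ofReal, Fin.sum_univ_one]
    rw [← Complex.ofReal_mul]
    norm_num [sq]

lemma smul_one_fromBlocks {n : Type} [DecidableEq n] (z : ℂ) :
    (z • 1 : Matrix (n ⊕ n) (n ⊕ n) ℂ) = fromBlocks (z • 1) 0 0 (z • 1) := by
  rw [← Matrix.fromBlocks_one, Matrix.fromBlocks_smul]
  simp

/-- inductive step: from k to k+2, doubling the matrix size -/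
lemma cliff_step {j : ℕ} (n : Type) [Fintype n] [DecidableEq n]
    (L : (Fin j → ℝ) →ₗ[ℝ] Matrix n n ℂ) (hL : CliffGood L) :
    ∃ L' : (Fin (j + 2) → ℝ) →ₗ[ℝ] Matrix (n ⊕ n) (n ⊕ n) ℂ, CliffGood L' := by
  classical
  have hj1 : j < j + 2 := by omega
  have hj2 : j + 1 < j + 2 := by omega
  set π : (Fin (j+2) → ℝ) →ₗ[ℝ] (Fin j → ℝ) :=
    LinearMap.funLeft ℝ ℝ (fun i => i.castSucc.castSucc) with hπ
  refine ⟨{ toFun := fun x =>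
              fromBlocks (cfun ⟨j, hj1⟩ ⟨j+1, hj2⟩ x • 1) (-(L (π x))ᴴ)
                (L (π x)) (star (cfun ⟨j, hj1⟩ ⟨j+1, hj2⟩ x) • 1)
            map_add' := ?_
            map_smul' := ?_ }, ?_⟩
  · intro x y
    simp only [map_add, star_add, ← Matrix.fromBlocks_add, add_smul, conjTranspose_add, neg_add]
  · intro a x
    simp only [_root_.map_smul, RingHom.id_apply, smul_assoc, conjTranspose_smul,
      star_trivial, star_smul, ← smul_neg, ← Matrix.fromBlocks_smul]
  · intro x
    have hsum : ((∑ i, x i ^ 2 : ℝ) : ℂ) =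
        ((∑ i, (π x) i ^ 2 : ℝ) : ℂ) + ((x ⟨j, hj1⟩ ^ 2 + x ⟨j+1, hj2⟩ ^ 2 : ℝ) : ℂ) := by
      rw [Fin.sum_univ_castSucc (f := fun i : Fin (j+2) => x i ^ 2),
        Fin.sum_univ_castSucc (f := fun i : Fin (j+1) => x i.castSucc ^ 2)]
      push_cast
      simp only [hπ, LinearMap.funLeft_apply, Fin.last, Fin.castSucc_mk]
      ring
    have h1 := (hL (π x)).1
    have h2 := (hL (π x)).2
    have key : ∀ A B : Matrix (n ⊕ n) (n ⊕ n) ℂ, A = B → A = B := fun _ _ h => h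
    constructor <;>
    · simp only [LinearMap.coe_mk, AddHom.coe_mk, fromBlocks_conjTranspose,
        conjTranspose_smul, conjTranspose_one, conjTranspose_neg, conjTranspose_conjTranspose,
        fromBlocks_multiply, star_star]
      rw [hsum, smul_one_fromBlocks, Matrix.fromBlocks_inj]
      refine ⟨?_, ?_, ?_, ?_⟩ <;>
      first
        | (simp [Matrix.mul_smul, Matrix.smul_mul, Matrix.mul_neg, Matrix.neg_mul]; done)
        | (simp only [Matrix.neg_mul, Matrix.mul_neg, neg_neg, smul_mul_smul_comm,
             one_mul, mul_one, h1, h2, star_cfun_mul, cfun_mul_star]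
           rw [← add_smul]
           try rw [add_comm])

lemma cliff_reindex {k : ℕ} {n n' : Type} [Fintype n] [DecidableEq n] [Fintype n'] [DecidableEq n']
    (e : n ≃ n') {L : (Fin k → ℝ) →ₗ[ℝ] Matrix n n ℂ} (hL : CliffGood L) :
    ∃ L' : (Fin k → ℝ) →ₗ[ℝ] Matrix n' n' ℂ, CliffGood L' := by
  refine ⟨(Matrix.reindexLinearEquiv ℝ ℂ e e).toLinearMap ∘ₗ L, fun x => ?_⟩
  constructor <;>
    simp [Matrix.reindexLinearEquiv_apply, Matrix.reindex_apply, Matrix.conjTranspose_submatrix,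
      Matrix.submatrix_mul_equiv, (hL x).1, (hL x).2, Matrix.submatrix_smul,
      Matrix.submatrix_one_equiv]

lemma cliff_main (m : ℕ) : ∀ k : ℕ, 0 < k →
    ∃ L : (Fin k → ℝ) →ₗ[ℝ]
        Matrix (Fin (m * 2 ^ ((k - 1) / 2))) (Fin (m * 2 ^ ((k - 1) / 2))) ℂ,
      CliffGood L := by
  intro k
  induction k using Nat.strong_induction_on with
  | _ k ih =>
    intro hk
    match k with
    | 0 => exact absurd hk (by omega)
    | 1 => exact cliff_base1 _
    | 2 => exact cliff_base2 _
    | (j+3) =>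
      obtain ⟨L, hL⟩ := ih (j+1) (by omega) (by omega)
      obtain ⟨L', hL'⟩ := cliff_step _ L hL
      have hr : m * 2 ^ ((j+1-1)/2) + m * 2 ^ ((j+1-1)/2) = m * 2 ^ ((j+3-1)/2) := by
        have h2 : (j+3-1)/2 = (j+1-1)/2 + 1 := by omega
        rw [h2, pow_succ]; ring
      exact cliff_reindex (finSumFinEquiv.trans (finCongr hr)) hL'

/-- For positive integers `k` and `m`, there exists a linear map `L : ℝᵏ → M_r(ℂ)` with
`L x` invertible for every `x ≠ 0`, where `r = m * 2 ^ ⌊(k−1)/2⌋`. -/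
theorem stmt_6 (k m : ℕ) (hk : 0 < k) (hm : 0 < m) :
    ∃ L : (Fin k → ℝ) →ₗ[ℝ]
        Matrix (Fin (m * 2 ^ ((k - 1) / 2))) (Fin (m * 2 ^ ((k - 1) / 2))) ℂ,
      ∀ x : Fin k → ℝ, x ≠ 0 → IsUnit (L x) := by
  obtain ⟨L, hL⟩ := cliff_main m k hk
  exact ⟨L, fun x hx => cliffGood_isUnit hL hx⟩
end

section
/- Let V be a real Euclidean vector space of odd dimension, 𝕊 the irreducible complex Clifford module with multiplication c⁺ (so that the even Clifford algebra surjects onto End(𝕊)), and W' a Hermitian vector space. On E = (𝕊 ⊗ W') ⊕ (𝕊 ⊗ W') with Clifford action c^E(v) = (c⁺(v) ⊗ 1, −c⁺(v) ⊗ 1) and grading E^± = 𝕊 ⊗ {(w, ±w) : w ∈ W'}, a self-adjoint odd endomorphism Z of E anticommutes with c^E(v) for all v ∈ V if and only if Z = 1 ⊗ [[0, φ],[−φ, 0]] for some skew-adjoint φ ∈ End(W'). -/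
open scoped RealInnerProductSpace InnerProductSpace TensorProduct

lemma aux_commutant {𝕊 W' : Type*} [AddCommGroup 𝕊] [Module ℂ 𝕊] [Module.Finite ℂ 𝕊] [Module.Free ℂ 𝕊]
    [AddCommGroup W'] [Module ℂ W']
    (f : 𝕊 ⊗[ℂ] W' →ₗ[ℂ] 𝕊 ⊗[ℂ] W')
    (hf : ∀ g : 𝕊 →ₗ[ℂ] 𝕊, LinearMap.rTensor W' g ∘ₗ f = f ∘ₗ LinearMap.rTensor W' g) :
    ∃ φ : W' →ₗ[ℂ] W', f = LinearMap.lTensor 𝕊 φ := by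
  rcases subsingleton_or_nontrivial 𝕊 with hS | hS
  · exact ⟨0, by ext t; exact Subsingleton.elim _ _⟩
  · have hnpos : 0 < Module.finrank ℂ 𝕊 := Module.finrank_pos
    let b := Module.finBasis ℂ 𝕊
    let i0 : Fin (Module.finrank ℂ 𝕊) := ⟨0, hnpos⟩
    let s₀ : 𝕊 := b i0
    let e : 𝕊 →ₗ[ℂ] ℂ := b.coord i0
    have he0 : e s₀ = 1 := by simp [e, s₀, Module.Basis.coord_apply]
    let π₀ : 𝕊 ⊗[ℂ] W' →ₗ[ℂ] W' :=
      (TensorProduct.lid ℂ W').toLinearMap ∘ₗ LinearMap.rTensor W' e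
    let φ : W' →ₗ[ℂ] W' := π₀ ∘ₗ f ∘ₗ TensorProduct.mk ℂ 𝕊 W' s₀
    have hg : ∀ (s x : 𝕊) (w : W'),
        LinearMap.rTensor W' (LinearMap.smulRight e s) (x ⊗ₜ[ℂ] w) = (e x) • s ⊗ₜ[ℂ] w := by
      intro s x w
      rw [LinearMap.rTensor_tmul, TensorProduct.smul_tmul']
      rfl
    have hP : ∀ t : 𝕊 ⊗[ℂ] W',
        LinearMap.rTensor W' (LinearMap.smulRight e s₀) t = s₀ ⊗ₜ[ℂ] π₀ t := by
      intro t
      induction t using TensorProduct.induction_on with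
      | zero => simp
      | tmul x w =>
        have hπ : π₀ (x ⊗ₜ[ℂ] w) = e x • w := by
          simp only [π₀, LinearMap.coe_comp, Function.comp_apply, LinearMap.rTensor_tmul,
            LinearEquiv.coe_coe, TensorProduct.lid_tmul]
        rw [hg, hπ, TensorProduct.tmul_smul]
      | add x y hx hy => rw [map_add, map_add, hx, hy, TensorProduct.tmul_add]
    have key0 : ∀ w : W', f (s₀ ⊗ₜ[ℂ] w) = s₀ ⊗ₜ[ℂ] φ w := by
      intro w
      have h1 := LinearMap.congr_fun (hf (LinearMap.smulRight e s₀)) (s₀ ⊗ₜ[ℂ] w)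
      simp only [LinearMap.coe_comp, Function.comp_apply] at h1
      rw [hg, he0, one_smul, hP] at h1
      exact h1.symm
    have key : ∀ (s : 𝕊) (w : W'), f (s ⊗ₜ[ℂ] w) = s ⊗ₜ[ℂ] φ w := by
      intro s w
      have h1 := LinearMap.congr_fun (hf (LinearMap.smulRight e s)) (s₀ ⊗ₜ[ℂ] w)
      simp only [LinearMap.coe_comp, Function.comp_apply] at h1
      rw [hg s s₀ w, he0, one_smul, key0 w, hg s s₀ (φ w), he0, one_smul] at h1
      exact h1.symm
    refine ⟨φ, LinearMap.ext fun t => ?_⟩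
    induction t using TensorProduct.induction_on with
    | zero => simp
    | tmul x w => rw [key, LinearMap.lTensor_tmul]
    | add x y hx hy => rw [map_add, map_add, hx, hy]

lemma aux_adjoin {𝕊 W' : Type*} [AddCommGroup 𝕊] [Module ℂ 𝕊] [AddCommGroup W'] [Module ℂ W']
    (B : 𝕊 ⊗[ℂ] W' →ₗ[ℂ] 𝕊 ⊗[ℂ] W') (s : Set (𝕊 →ₗ[ℂ] 𝕊)) (hs : Algebra.adjoin ℂ s = ⊤)
    (h : ∀ g ∈ s, LinearMap.rTensor W' g ∘ₗ B = B ∘ₗ LinearMap.rTensor W' g) :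
    ∀ g : 𝕊 →ₗ[ℂ] 𝕊, LinearMap.rTensor W' g ∘ₗ B = B ∘ₗ LinearMap.rTensor W' g := by
  let S : Subalgebra ℂ (𝕊 →ₗ[ℂ] 𝕊) :=
    { carrier := {g | LinearMap.rTensor W' g ∘ₗ B = B ∘ₗ LinearMap.rTensor W' g}
      mul_mem' := by
        intro g h hg hh
        simp only [Set.mem_setOf_eq] at *
        rw [Module.End.mul_eq_comp, LinearMap.rTensor_comp, LinearMap.comp_assoc, hh,
          ← LinearMap.comp_assoc, hg, LinearMap.comp_assoc]
      add_mem' := by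
        intro g h hg hh
        simp only [Set.mem_setOf_eq] at *
        rw [LinearMap.rTensor_add, LinearMap.add_comp, LinearMap.comp_add, hg, hh]
      one_mem' := by
        show LinearMap.rTensor W' (LinearMap.id) ∘ₗ B = B ∘ₗ LinearMap.rTensor W' (LinearMap.id)
        rw [LinearMap.rTensor_id, LinearMap.id_comp, LinearMap.comp_id]
      zero_mem' := by
        simp only [Set.mem_setOf_eq, LinearMap.rTensor_zero, LinearMap.zero_comp,
          LinearMap.comp_zero]
      algebraMap_mem' := by
        intro r
        simp only [Set.mem_setOf_eq, Module.algebraMap_end_eq_smul_id, LinearMap.rTensor_smul,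
          LinearMap.rTensor_id, LinearMap.smul_comp, LinearMap.comp_smul, LinearMap.id_comp,
          LinearMap.comp_id] }
  have hle : Algebra.adjoin ℂ s ≤ S := Algebra.adjoin_le h
  rw [hs] at hle
  exact fun g => hle (Algebra.mem_top)

lemma aux_cancel_two {𝕊 W' : Type*} [AddCommGroup 𝕊] [Module ℂ 𝕊] [AddCommGroup W'] [Module ℂ W']
    {x y : 𝕊 ⊗[ℂ] W'} (h : x + x = y + y) : x = y := by
  have h2 : (2 : ℂ) • x = (2 : ℂ) • y := by rw [two_smul, two_smul]; exact h
  have h3 := congrArg (fun z => (2 : ℂ)⁻¹ • z) h2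
  simpa [smul_smul, inv_mul_cancel₀ (two_ne_zero (α := ℂ))] using h3

lemma aux_odd {𝕊 W' : Type*} [AddCommGroup 𝕊] [Module ℂ 𝕊] [AddCommGroup W'] [Module ℂ W']
    (At Bt Ct Dt : 𝕊 ⊗[ℂ] W') (h1 : Ct + Dt = -(At + Bt)) (h2 : Ct + -Dt = At + -Bt) :
    Ct = -Bt ∧ Dt = -At := by
  constructor
  · apply aux_cancel_two
    linear_combination (norm := module) h1 + h2
  · apply aux_cancel_two
    linear_combination (norm := module) h1 - h2

/-- Let `V` be an odd-dimensional Euclidean space, `𝕊` the irreducible complex Clifford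
module with multiplication `c⁺` (so `c⁺(v)² = −‖v‖²`, `c⁺(v)` is skew-adjoint, and the even
Clifford algebra — generated by the products `c⁺(v)c⁺(w)` — is all of `End 𝕊`), and `W'` a
Hermitian space.  On `E = (𝕊 ⊗ W') ⊕ (𝕊 ⊗ W')` with Clifford action
`c^E(v) = (c⁺(v) ⊗ 1, −c⁺(v) ⊗ 1)` and grading `E^± = 𝕊 ⊗ {(w, ±w)}`, a self-adjoint odd
endomorphism `Z` anticommutes with every `c^E(v)` iff `Z = 1 ⊗ [[0, φ], [−φ, 0]]` for some
skew-adjoint `φ : W' → W'`, i.e. `Z (a, b) = ((1⊗φ) b, −(1⊗φ) a)`. -/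
theorem stmt_16 {V : Type*} [NormedAddCommGroup V] [InnerProductSpace ℝ V]
    [FiniteDimensional ℝ V] (hodd : Odd (Module.finrank ℝ V))
    {𝕊 : Type*} [NormedAddCommGroup 𝕊] [InnerProductSpace ℂ 𝕊] [FiniteDimensional ℂ 𝕊]
    {W' : Type*} [NormedAddCommGroup W'] [InnerProductSpace ℂ W'] [FiniteDimensional ℂ W']
    [NormedAddCommGroup (𝕊 ⊗[ℂ] W')] [InnerProductSpace ℂ (𝕊 ⊗[ℂ] W')]
    (c : V →ₗ[ℝ] (𝕊 →ₗ[ℂ] 𝕊))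
    (hc : ∀ v : V, c v * c v = ((-‖v‖ ^ 2 : ℝ) : ℂ) • 1)
    (hskew : ∀ (v : V) (x y : 𝕊), ⟪c v x, y⟫_ℂ = -⟪x, c v y⟫_ℂ)
    (hsurj : Algebra.adjoin ℂ {g : 𝕊 →ₗ[ℂ] 𝕊 | ∃ v w : V, g = c v * c w} = ⊤)
    (hinner : ∀ (s₁ s₂ : 𝕊) (w₁ w₂ : W'),
      ⟪s₁ ⊗ₜ[ℂ] w₁, s₂ ⊗ₜ[ℂ] w₂⟫_ℂ = ⟪s₁, s₂⟫_ℂ * ⟪w₁, w₂⟫_ℂ)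
    (Z : ((𝕊 ⊗[ℂ] W') × (𝕊 ⊗[ℂ] W')) →ₗ[ℂ] ((𝕊 ⊗[ℂ] W') × (𝕊 ⊗[ℂ] W')))
    (hZsa : ∀ p q : (𝕊 ⊗[ℂ] W') × (𝕊 ⊗[ℂ] W'),
      ⟪(Z p).1, q.1⟫_ℂ + ⟪(Z p).2, q.2⟫_ℂ = ⟪p.1, (Z q).1⟫_ℂ + ⟪p.2, (Z q).2⟫_ℂ)
    (hZodd₁ : ∀ t : 𝕊 ⊗[ℂ] W', (Z (t, t)).2 = -(Z (t, t)).1)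
    (hZodd₂ : ∀ t : 𝕊 ⊗[ℂ] W', (Z (t, -t)).2 = (Z (t, -t)).1) :
    (∀ v : V,
      Z ∘ₗ LinearMap.prodMap (LinearMap.rTensor W' (c v)) (-(LinearMap.rTensor W' (c v)))
        + LinearMap.prodMap (LinearMap.rTensor W' (c v)) (-(LinearMap.rTensor W' (c v)))
          ∘ₗ Z = 0) ↔
    (∃ φ : W' →ₗ[ℂ] W', (∀ w w' : W', ⟪φ w, w'⟫_ℂ = -⟪w, φ w'⟫_ℂ) ∧
      ∀ p : (𝕊 ⊗[ℂ] W') × (𝕊 ⊗[ℂ] W'),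
        Z p = (LinearMap.lTensor 𝕊 φ p.2, -(LinearMap.lTensor 𝕊 φ p.1))) := by
  constructor
  · intro H
    rcases subsingleton_or_nontrivial 𝕊 with hS | hS
    · refine ⟨0, fun w w' => by simp, fun p => ?_⟩
      exact Subsingleton.elim _ _
    -- block decomposition of Z
    let A : 𝕊 ⊗[ℂ] W' →ₗ[ℂ] 𝕊 ⊗[ℂ] W' := LinearMap.fst ℂ _ _ ∘ₗ Z ∘ₗ LinearMap.inl ℂ _ _
    let B : 𝕊 ⊗[ℂ] W' →ₗ[ℂ] 𝕊 ⊗[ℂ] W' := LinearMap.fst ℂ _ _ ∘ₗ Z ∘ₗ LinearMap.inr ℂ _ _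
    let C : 𝕊 ⊗[ℂ] W' →ₗ[ℂ] 𝕊 ⊗[ℂ] W' := LinearMap.snd ℂ _ _ ∘ₗ Z ∘ₗ LinearMap.inl ℂ _ _
    let D : 𝕊 ⊗[ℂ] W' →ₗ[ℂ] 𝕊 ⊗[ℂ] W' := LinearMap.snd ℂ _ _ ∘ₗ Z ∘ₗ LinearMap.inr ℂ _ _
    have hZ : ∀ a b : 𝕊 ⊗[ℂ] W', Z (a, b) = (A a + B b, C a + D b) := by
      intro a b
      have h0 : ((a, b) : (𝕊 ⊗[ℂ] W') × (𝕊 ⊗[ℂ] W')) = (a, 0) + (0, b) := by simp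
      rw [h0, map_add]
      rfl
    -- Z is odd: C = -B, D = -A
    have hCB : ∀ t : 𝕊 ⊗[ℂ] W', C t = -B t := by
      intro t
      have h1 := hZodd₁ t
      have h2 := hZodd₂ t
      rw [hZ] at h1 h2
      simp only at h1 h2
      rw [B.map_neg t, D.map_neg t] at h2
      exact (aux_odd (A t) (B t) (C t) (D t) h1 h2).1
    have hDA : ∀ t : 𝕊 ⊗[ℂ] W', D t = -A t := by
      intro t
      have h1 := hZodd₁ t
      have h2 := hZodd₂ t
      rw [hZ] at h1 h2
      simp only at h1 h2
      rw [B.map_neg t, D.map_neg t] at h2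
      exact (aux_odd (A t) (B t) (C t) (D t) h1 h2).2
    -- extract component anticommutation / commutation
    have hAC : ∀ (v : V) (a : 𝕊 ⊗[ℂ] W'),
        (A (LinearMap.rTensor W' (c v) a) + LinearMap.rTensor W' (c v) (A a) = 0) ∧
        (C (LinearMap.rTensor W' (c v) a) = LinearMap.rTensor W' (c v) (C a)) := by
      intro v a
      have hv := LinearMap.congr_fun (H v) (a, 0)
      simp only [LinearMap.add_apply, LinearMap.comp_apply, LinearMap.prodMap_apply,
        Prod.map_apply, LinearMap.neg_apply, map_zero, LinearMap.zero_apply, neg_zero] at hv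
      rw [hZ, hZ] at hv
      simp only [map_zero, add_zero, Prod.mk_add_mk, Prod.mk_eq_zero] at hv
      obtain ⟨hv1, hv2⟩ := hv
      refine ⟨hv1, ?_⟩
      have h5 := eq_neg_of_add_eq_zero_left hv2
      rw [neg_neg] at h5
      exact h5
    have hA : ∀ (v : V) (a : 𝕊 ⊗[ℂ] W'),
        A (LinearMap.rTensor W' (c v) a) + LinearMap.rTensor W' (c v) (A a) = 0 :=
      fun v a => (hAC v a).1
    have hC : ∀ (v : V) (a : 𝕊 ⊗[ℂ] W'),
        C (LinearMap.rTensor W' (c v) a) = LinearMap.rTensor W' (c v) (C a) :=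
      fun v a => (hAC v a).2
    have hB : ∀ (v : V), LinearMap.rTensor W' (c v) ∘ₗ B = B ∘ₗ LinearMap.rTensor W' (c v) := by
      intro v
      apply LinearMap.ext; intro a
      simp only [LinearMap.comp_apply]
      have h1 := hC v a
      rw [hCB, hCB, (LinearMap.rTensor W' (c v)).map_neg (B a)] at h1
      have h2 := congrArg Neg.neg h1
      rw [neg_neg, neg_neg] at h2
      exact h2.symm
    have hAv : ∀ (v : V),
        LinearMap.rTensor W' (c v) ∘ₗ A = -(A ∘ₗ LinearMap.rTensor W' (c v)) := by
      intro v
      apply LinearMap.ext; intro a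
      simp only [LinearMap.comp_apply, LinearMap.neg_apply]
      exact eq_neg_of_add_eq_zero_right (hA v a)
    -- B commutes with everything, A = lTensor of something
    have hBall := aux_adjoin B _ hsurj (by
      rintro g ⟨v, w, rfl⟩
      rw [Module.End.mul_eq_comp, LinearMap.rTensor_comp, LinearMap.comp_assoc, hB w,
        ← LinearMap.comp_assoc, hB v, LinearMap.comp_assoc])
    have hAall := aux_adjoin A _ hsurj (by
      rintro g ⟨v, w, rfl⟩
      rw [Module.End.mul_eq_comp, LinearMap.rTensor_comp, LinearMap.comp_assoc, hAv w,
        LinearMap.comp_neg, ← LinearMap.comp_assoc, hAv v, LinearMap.neg_comp, neg_neg,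
        LinearMap.comp_assoc])
    obtain ⟨φ, hφ⟩ := aux_commutant B hBall
    obtain ⟨ψ, hψ⟩ := aux_commutant A hAall
    -- A = 0
    have hA0 : A = 0 := by
      obtain ⟨v, hv⟩ : ∃ v : V, v ≠ 0 := by
        have : Nontrivial V := by
          have h1 : Module.finrank ℝ V ≠ 0 := by
            rcases hodd with ⟨k, hk⟩; omega
          have := Nat.pos_of_ne_zero h1
          exact Module.nontrivial_of_finrank_pos this
        exact exists_ne 0
      have hcomm : LinearMap.rTensor W' (c v) ∘ₗ A = A ∘ₗ LinearMap.rTensor W' (c v) := by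
        rw [hψ, LinearMap.rTensor_comp_lTensor, LinearMap.lTensor_comp_rTensor]
      have hzero : A ∘ₗ LinearMap.rTensor W' (c v) = 0 := by
        have h1 := hAv v
        rw [hcomm] at h1
        have h2 : (2 : ℂ) • (A ∘ₗ LinearMap.rTensor W' (c v)) = 0 := by
          rw [two_smul]
          linear_combination (norm := module) h1
        have := smul_eq_zero.mp h2
        rcases this with h | h
        · exact absurd h two_ne_zero
        · exact h
      have hcc : LinearMap.rTensor W' (c v) ∘ₗ LinearMap.rTensor W' (c v)
          = ((-‖v‖ ^ 2 : ℝ) : ℂ) • (LinearMap.id : 𝕊 ⊗[ℂ] W' →ₗ[ℂ] 𝕊 ⊗[ℂ] W') := by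
        rw [← LinearMap.rTensor_comp, ← Module.End.mul_eq_comp, hc v, LinearMap.rTensor_smul]
        congr 1
        exact LinearMap.rTensor_id W' 𝕊
      have hsq : A ∘ₗ (LinearMap.rTensor W' (c v) ∘ₗ LinearMap.rTensor W' (c v)) = 0 := by
        rw [← LinearMap.comp_assoc, hzero, LinearMap.zero_comp]
      rw [hcc, LinearMap.comp_smul, LinearMap.comp_id] at hsq
      have hne : ((-‖v‖ ^ 2 : ℝ) : ℂ) ≠ 0 :=
        Complex.ofReal_ne_zero.mpr
          (neg_ne_zero.mpr (pow_ne_zero 2 (norm_ne_zero_iff.mpr hv)))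
      rcases smul_eq_zero.mp hsq with h | h
      · exact absurd h hne
      · exact h
    -- final form of Z
    have hform : ∀ p : (𝕊 ⊗[ℂ] W') × (𝕊 ⊗[ℂ] W'),
        Z p = (B p.2, -(B p.1)) := by
      intro p
      obtain ⟨a, b⟩ := p
      rw [hZ, hCB, hDA, hA0]
      simp
    -- conclude, with skewness of φ from self-adjointness
    obtain ⟨s, hs⟩ : ∃ s : 𝕊, s ≠ 0 := exists_ne 0
    have hsne : (⟪s, s⟫_ℂ) ≠ 0 := fun h => hs (inner_self_eq_zero.mp h)
    refine ⟨φ, fun w w' => ?_, fun p => by rw [hform p, hφ]⟩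
    have h0 := hZsa (s ⊗ₜ[ℂ] w, 0) (0, s ⊗ₜ[ℂ] w')
    rw [hform, hform] at h0
    simp only [LinearMap.map_zero, neg_zero] at h0
    rw [hφ] at h0
    simp only [LinearMap.lTensor_tmul] at h0
    rw [← TensorProduct.neg_tmul, hinner, hinner, inner_neg_left] at h0
    have h1 : ⟪s, s⟫_ℂ * (-⟪φ w, w'⟫_ℂ) = ⟪s, s⟫_ℂ * ⟪w, φ w'⟫_ℂ := by
      linear_combination h0
    have h2 := mul_left_cancel₀ hsne h1
    linear_combination -h2
  · rintro ⟨φ, hφskew, hform⟩ v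
    apply LinearMap.ext
    rintro ⟨a, b⟩
    have hcomm : ∀ t : 𝕊 ⊗[ℂ] W',
        LinearMap.lTensor 𝕊 φ (LinearMap.rTensor W' (c v) t)
          = LinearMap.rTensor W' (c v) (LinearMap.lTensor 𝕊 φ t) := by
      intro t
      rw [← LinearMap.comp_apply, ← LinearMap.comp_apply, LinearMap.lTensor_comp_rTensor,
        LinearMap.rTensor_comp_lTensor]
    simp only [LinearMap.add_apply, LinearMap.comp_apply, LinearMap.prodMap_apply,
      Prod.map_apply, LinearMap.neg_apply, LinearMap.zero_apply]
    rw [hform, hform]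
    rw [(LinearMap.lTensor 𝕊 φ).map_neg (LinearMap.rTensor W' (c v) b),
      (LinearMap.rTensor W' (c v)).map_neg (LinearMap.lTensor 𝕊 φ a), neg_neg,
      Prod.mk_add_mk, Prod.mk_eq_zero]
    constructor
    · rw [hcomm]; abel
    · rw [hcomm]; abel
end
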